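/- Let d ≥ 1. For a locally finite set A ⊆ ℝ^d with 0 ∈ A and an integer k ≥ 1, let D_k(0, A) = {x ∈ ℝ^d : fewer than k points a ∈ A \ {0} satisfy ‖x − a‖ < ‖x‖}, and let ∂D_k(0, A) denote its topological boundary. Then for every integer k ≥ 1 and every real ε > 0, there exists τ > 0 such that: for every injective map φ: ℤ^d → ℝ^d with φ(0) = 0 and sup_{a∈ℤ^d} ‖a − φ(a)‖ < τ, every unit vector u ∈ ℝ^d, and all reals λ, μ ≥ 0 with λu ∈ ∂D_k(0, ℤ^d) and μu ∈ ∂D_k(0, φ(ℤ^d)), one has |λ − μ| < ε. -/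

import Mathlib

open Set Metric MeasureTheory

noncomputable section

/-- The integer lattice `ℤ^d` as a subset of `ℝ^d`. -/
def intLattice (d : ℕ) : Set (EuclideanSpace ℝ (Fin d)) :=
  {x | ∀ i, ∃ n : ℤ, x i = (n : ℝ)}

/-- The canonical embedding of integer vectors into `ℝ^d`. -/
def toEuc (d : ℕ) (a : Fin d → ℤ) : EuclideanSpace ℝ (Fin d) :=
  WithLp.toLp 2 (fun i => (a i : ℝ))

/-- The `k`-th Brillouin zone of `a` in `A`: points `x` such that at most `k-1` points of
`A \ {a}` are strictly closer to `x` than `a`, and at least `k-1` points of `A \ {a}` are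
at distance at most `dist x a` from `x`. -/
def brillouinZone (d k : ℕ) (A : Set (EuclideanSpace ℝ (Fin d)))
    (a : EuclideanSpace ℝ (Fin d)) : Set (EuclideanSpace ℝ (Fin d)) :=
  {x | {p | p ∈ A \ {a} ∧ dist x p < dist x a}.encard ≤ ((k - 1 : ℕ) : ℕ∞) ∧
       ((k - 1 : ℕ) : ℕ∞) ≤ {p | p ∈ A \ {a} ∧ dist x p ≤ dist x a}.encard}

/-- The set of points with exactly `k-1` points of `A \ {a}` strictly closer than `a` and
no point of `A \ {a}` at exactly distance `dist x a`; its connected components are the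
chambers of the `k`-th Brillouin zone. -/
def chamberRegion (d k : ℕ) (A : Set (EuclideanSpace ℝ (Fin d)))
    (a : EuclideanSpace ℝ (Fin d)) : Set (EuclideanSpace ℝ (Fin d)) :=
  {x | {p | p ∈ A \ {a} ∧ dist x p < dist x a}.encard = ((k - 1 : ℕ) : ℕ∞) ∧
       ∀ p ∈ A \ {a}, dist x p ≠ dist x a}

/-- The chambers of the `k`-th Brillouin zone of `a` in `A`. -/
def chambers (d k : ℕ) (A : Set (EuclideanSpace ℝ (Fin d)))
    (a : EuclideanSpace ℝ (Fin d)) : Set (Set (EuclideanSpace ℝ (Fin d))) :=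
  {C | ∃ x ∈ chamberRegion d k A a, C = connectedComponentIn (chamberRegion d k A a) x}

/-- `ν_d`, the volume of the unit ball in `ℝ^d`. -/
def unitBallVol (d : ℕ) : ℝ := Real.pi ^ ((d : ℝ) / 2) / Real.Gamma ((d : ℝ) / 2 + 1)

/-- `D_k(0, A)`: the set of points `x` such that fewer than `k` points of `A \ {0}` are
strictly closer to `x` than `0`; it is the union of the first `k` Brillouin zones of `0`. -/
def bzUnion (d k : ℕ) (A : Set (EuclideanSpace ℝ (Fin d))) :
    Set (EuclideanSpace ℝ (Fin d)) :=
  {x | {a | a ∈ A \ {0} ∧ dist x a < ‖x‖}.encard < (k : ℕ∞)}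

namespace Scratch

variable {d k : ℕ}

abbrev E (d : ℕ) := EuclideanSpace ℝ (Fin d)

/-- number of points of `A \ {0}` within distance `r` (weak). -/
def Nle (A : Set (E d)) (x : E d) (r : ℝ) : ℕ∞ :=
  {a | a ∈ A \ {0} ∧ dist x a ≤ r}.encard

def Sset (A : Set (E d)) (k : ℕ) (x : E d) : Set ℝ := {r | (k : ℕ∞) ≤ Nle A x r}

/-- k-th nearest-point distance function. -/
def fk (A : Set (E d)) (k : ℕ) (x : E d) : ℝ := sInf (Sset A k x)

lemma Nle_mono {A : Set (E d)} {x : E d} {r r' : ℝ} (h : r ≤ r') :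
    Nle A x r ≤ Nle A x r' :=
  Set.encard_mono (fun a ha => ⟨ha.1, ha.2.trans h⟩)

lemma Sset_bdd (A : Set (E d)) (hk : 1 ≤ k) (x : E d) : BddBelow (Sset A k x) := by
  refine ⟨0, fun r hr => ?_⟩
  by_contra hr0
  push_neg at hr0
  have : {a | a ∈ A \ {0} ∧ dist x a ≤ r} = ∅ := by
    ext a; simp only [mem_setOf_eq, mem_empty_iff_false, iff_false]
    rintro ⟨-, hd⟩
    exact absurd (dist_nonneg.trans hd) (not_le.2 hr0)
  have h0 : Nle A x r = 0 := by rw [Nle, this, Set.encard_empty]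
  rw [Sset, mem_setOf_eq, h0, nonpos_iff_eq_zero] at hr
  simp only [Nat.cast_eq_zero] at hr
  omega

lemma fk_le {A : Set (E d)} (hk : 1 ≤ k) {x : E d} {r : ℝ}
    (hr : r ∈ Sset A k x) : fk A k x ≤ r :=
  csInf_le (Sset_bdd A hk x) hr

/-- Key characterization: fewer than `k` points strictly within `t` iff `t ≤ fk`. -/
lemma Nlt_lt_iff {A : Set (E d)} (hk : 1 ≤ k) {x : E d}
    (hS : (Sset A k x).Nonempty) (t : ℝ) :
    {a | a ∈ A \ {0} ∧ dist x a < t}.encard < (k : ℕ∞) ↔ t ≤ fk A k x := by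
  constructor
  · intro h
    refine le_csInf hS (fun r hr => ?_)
    by_contra hlt
    push_neg at hlt
    have hsub : {a | a ∈ A \ {0} ∧ dist x a ≤ r} ⊆ {a | a ∈ A \ {0} ∧ dist x a < t} :=
      fun a ha => ⟨ha.1, lt_of_le_of_lt ha.2 hlt⟩
    exact absurd (le_trans hr (Set.encard_mono hsub)) (not_le.2 h)
  · intro h
    by_contra hcount
    push_neg at hcount
    obtain ⟨T, hTsub, hTcard⟩ := Set.exists_subset_encard_eq hcount
    have hTfin : T.Finite := Set.finite_of_encard_eq_coe hTcard
    have hTne : T.Nonempty := by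
      rw [Set.nonempty_iff_ne_empty]
      rintro rfl
      rw [Set.encard_empty] at hTcard
      simp only [eq_comm, Nat.cast_eq_zero] at hTcard
      omega
    obtain ⟨a0, ha0T, ha0max⟩ := Set.exists_max_image T (fun a => dist x a) hTfin hTne
    have hr : dist x a0 ∈ Sset A k x := by
      rw [Sset, mem_setOf_eq, ← hTcard]
      exact Set.encard_mono (fun a haT => ⟨(hTsub haT).1, ha0max a haT⟩)
    have : fk A k x ≤ dist x a0 := fk_le hk hr
    exact absurd (lt_of_le_of_lt (h.trans this) (hTsub ha0T).2) (lt_irrefl t)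

lemma bzUnion_eq (A : Set (E d)) (hk : 1 ≤ k)
    (hS : ∀ x : E d, (Sset A k x).Nonempty) :
    bzUnion d k A = {x : E d | ‖x‖ ≤ fk A k x} := by
  ext x
  rw [bzUnion, mem_setOf_eq, mem_setOf_eq, Nlt_lt_iff hk (hS x)]

/-- one-sided Lipschitz estimate. -/
lemma fk_le_fk_add {A : Set (E d)} (hk : 1 ≤ k) {x y : E d}
    (hSy : (Sset A k y).Nonempty) :
    fk A k x ≤ fk A k y + dist x y := by
  have h1 : ∀ r ∈ Sset A k y, fk A k x ≤ r + dist x y := by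
    intro r hr
    refine fk_le hk ?_
    rw [Sset, mem_setOf_eq]
    refine le_trans hr (Set.encard_mono fun a ha => ⟨ha.1, ?_⟩)
    calc dist x a ≤ dist x y + dist y a := dist_triangle x y a
    _ ≤ dist x y + r := by linarith [ha.2]
    _ = r + dist x y := by ring
  have : fk A k x - dist x y ≤ fk A k y :=
    le_csInf hSy (fun r hr => by linarith [h1 r hr])
  linarith

lemma fk_continuous (A : Set (E d)) (hk : 1 ≤ k)
    (hS : ∀ x : E d, (Sset A k x).Nonempty) :
    Continuous (fk A k) := by
  have : LipschitzWith 1 (fk A k) := by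
    refine LipschitzWith.of_dist_le_mul (fun x y => ?_)
    simp only [NNReal.coe_one, one_mul, Real.dist_eq, abs_sub_le_iff]
    refine ⟨?_, ?_⟩
    · linarith [fk_le_fk_add hk (x := x) (y := y) (hS y)]
    · have := fk_le_fk_add hk (x := y) (y := x) (hS x)
      rw [dist_comm] at this; linarith
  exact this.continuous

lemma frontier_fk_eq (A : Set (E d)) (hk : 1 ≤ k)
    (hS : ∀ x : E d, (Sset A k x).Nonempty) {x : E d}
    (hx : x ∈ frontier (bzUnion d k A)) : fk A k x = ‖x‖ := by
  rw [bzUnion_eq A hk hS] at hx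
  have hcont : Continuous (fun y : E d => fk A k y - ‖y‖) :=
    (fk_continuous A hk hS).sub continuous_norm
  have hclosed : IsClosed {y : E d | ‖y‖ ≤ fk A k y} := by
    have : {y : E d | ‖y‖ ≤ fk A k y} = {y : E d | (0:ℝ) ≤ fk A k y - ‖y‖} := by
      ext y; simp [sub_nonneg]
    rw [this]
    exact isClosed_le continuous_const hcont
  have h1 : x ∈ {y : E d | ‖y‖ ≤ fk A k y} :=
    hclosed.closure_subset (frontier_subset_closure hx)
  have h2 : x ∈ closure ({y : E d | ‖y‖ ≤ fk A k y}ᶜ) := by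
    rw [closure_compl]
    exact fun hmem => hx.2 hmem
  have hclosed2 : IsClosed {y : E d | fk A k y ≤ ‖y‖} :=
    isClosed_le (fk_continuous A hk hS) continuous_norm
  have hsub : ({y : E d | ‖y‖ ≤ fk A k y}ᶜ : Set (E d)) ⊆ {y : E d | fk A k y ≤ ‖y‖} := by
    intro y hy
    simp only [mem_compl_iff, mem_setOf_eq, not_le] at hy
    exact le_of_lt hy
  have h3 : fk A k x ≤ ‖x‖ :=
    (hclosed2.closure_subset ((closure_mono hsub) h2 : x ∈ closure {y : E d | fk A k y ≤ ‖y‖}))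
  exact le_antisymm h3 h1


/-- comparison of `fk` under a point-wise `τ`-perturbation. -/
lemma Sset_comp {A B : Set (E d)} {τ : ℝ} (g : E d → E d)
    (hg : Set.InjOn g (A \ {0})) (hmap : ∀ a ∈ A \ {0}, g a ∈ B \ {0})
    (hdist : ∀ a ∈ A \ {0}, dist a (g a) ≤ τ) {x : E d} {r : ℝ}
    (hr : r ∈ Sset A k x) : r + τ ∈ Sset B k x := by
  rw [Sset, mem_setOf_eq] at hr ⊢
  have hsub : g '' {a | a ∈ A \ {0} ∧ dist x a ≤ r} ⊆ {b | b ∈ B \ {0} ∧ dist x b ≤ r + τ} := by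
    rintro b ⟨a, ⟨haA, har⟩, rfl⟩
    refine ⟨hmap a haA, ?_⟩
    calc dist x (g a) ≤ dist x a + dist a (g a) := dist_triangle _ _ _
    _ ≤ r + τ := add_le_add har (hdist a haA)
  calc (k : ℕ∞) ≤ {a | a ∈ A \ {0} ∧ dist x a ≤ r}.encard := hr
  _ = (g '' {a | a ∈ A \ {0} ∧ dist x a ≤ r}).encard :=
      (Set.InjOn.encard_image (hg.mono (fun a ha => ha.1))).symm
  _ ≤ _ := Set.encard_mono hsub

lemma fk_comp (hk : 1 ≤ k) {A B : Set (E d)} {τ : ℝ} (g : E d → E d)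
    (hg : Set.InjOn g (A \ {0})) (hmap : ∀ a ∈ A \ {0}, g a ∈ B \ {0})
    (hdist : ∀ a ∈ A \ {0}, dist a (g a) ≤ τ) {x : E d}
    (hS : (Sset A k x).Nonempty) :
    (Sset B k x).Nonempty ∧ fk B k x ≤ fk A k x + τ := by
  obtain ⟨r0, hr0⟩ := hS
  refine ⟨⟨r0 + τ, Sset_comp g hg hmap hdist hr0⟩, ?_⟩
  have h1 : ∀ r ∈ Sset A k x, fk B k x ≤ r + τ := fun r hr =>
    fk_le hk (Sset_comp g hg hmap hdist hr)
  have : fk B k x - τ ≤ fk A k x :=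
    le_csInf ⟨r0, hr0⟩ (fun r hr => by linarith [h1 r hr])
  linarith

/-! lattice facts -/

lemma coord_le_norm (x : E d) (i : Fin d) : |x i| ≤ ‖x‖ := by
  rw [EuclideanSpace.norm_eq]
  have h1 : |x i| = Real.sqrt (‖x i‖ ^ 2) := by
    rw [Real.sqrt_sq_eq_abs]; simp [Real.norm_eq_abs, abs_abs]
  rw [h1]
  apply Real.sqrt_le_sqrt
  exact Finset.single_le_sum (f := fun j => ‖x j‖ ^ 2)
    (fun j _ => sq_nonneg _) (Finset.mem_univ i)

lemma toEuc_injective : Function.Injective (toEuc d) := by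
  intro a b hab
  funext i
  have : ((a i : ℝ)) = (b i : ℝ) := by simpa [toEuc] using congrArg (fun x : E d => x i) hab
  exact_mod_cast this

lemma toEuc_mem (a : Fin d → ℤ) : toEuc d a ∈ intLattice d := fun i => ⟨a i, rfl⟩

lemma intLattice_eq_range : intLattice d = Set.range (toEuc d) := by
  ext x
  constructor
  · intro hx
    refine ⟨fun i => (hx i).choose, ?_⟩
    ext i
    exact ((hx i).choose_spec).symm
  · rintro ⟨a, rfl⟩
    exact toEuc_mem a

lemma toEuc_eq_zero_iff {a : Fin d → ℤ} : toEuc d a = 0 ↔ a = 0 := by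
  constructor
  · intro h
    funext i
    have : ((a i : ℝ)) = 0 := by simpa [toEuc] using congrArg (fun x : E d => x i) h
    exact_mod_cast this
  · rintro rfl; ext i; simp [toEuc]

lemma lat_norm_ge_one {a : E d} (ha : a ∈ intLattice d) (ha0 : a ≠ 0) : 1 ≤ ‖a‖ := by
  rw [intLattice_eq_range] at ha
  obtain ⟨v, rfl⟩ := ha
  have hv : v ≠ 0 := fun h => ha0 (by rw [h]; exact toEuc_eq_zero_iff.2 rfl)
  obtain ⟨i, hi⟩ := Function.ne_iff.1 hv
  have h1 : (1 : ℝ) ≤ |(v i : ℝ)| := by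
    rw [← Int.cast_abs]
    exact_mod_cast Int.one_le_abs (by simpa using hi)
  exact h1.trans (coord_le_norm (toEuc d v) i)

lemma lat_ball_finite (x : E d) (R : ℝ) :
    {a | a ∈ intLattice d ∧ dist x a ≤ R}.Finite := by
  obtain ⟨M, hM⟩ := exists_nat_ge (‖x‖ + R)
  have hsub : {a | a ∈ intLattice d ∧ dist x a ≤ R} ⊆
      toEuc d '' {v : Fin d → ℤ | ∀ i, v i ∈ Set.Icc (-(M:ℤ)) (M:ℤ)} := by
    rintro a ⟨ha, haR⟩
    rw [intLattice_eq_range] at ha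
    obtain ⟨v, rfl⟩ := ha
    refine ⟨v, fun i => ?_, rfl⟩
    have hn : ‖toEuc d v‖ ≤ ‖x‖ + R := by
      have h0 : ‖toEuc d v‖ - ‖x‖ ≤ dist (toEuc d v) x := by
        rw [dist_eq_norm]
        exact norm_sub_norm_le _ _
      rw [dist_comm] at h0
      linarith
    have hco : |(toEuc d v) i| ≤ (M : ℝ) :=
      le_trans (le_trans (coord_le_norm (toEuc d v) i) hn) hM
    have hco : |(v i : ℝ)| ≤ (M : ℝ) := hco
    have : |v i| ≤ (M : ℤ) := by exact_mod_cast (by rwa [← Int.cast_abs] at hco :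
      ((|v i| : ℤ) : ℝ) ≤ (M : ℝ))
    exact ⟨neg_le_of_abs_le this, le_of_abs_le this⟩
  refine Set.Finite.subset (Set.Finite.image _ ?_) hsub
  have : {v : Fin d → ℤ | ∀ i, v i ∈ Set.Icc (-(M:ℤ)) (M:ℤ)} =
      Set.pi Set.univ (fun _ => Set.Icc (-(M:ℤ)) (M:ℤ)) := by
    ext v
    simp [Set.mem_pi, Pi.le_def, forall_and]
  rw [this]
  exact Set.Finite.pi (fun _ => Set.finite_Icc _ _)


lemma round_close (x : E d) : dist x (toEuc d (fun i => round (x i))) ≤ Real.sqrt d := by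
  rw [dist_eq_norm, EuclideanSpace.norm_eq]
  have hd : (d : ℝ) = ∑ _i : Fin d, (1:ℝ) := by simp
  rw [hd]
  apply Real.sqrt_le_sqrt
  apply Finset.sum_le_sum
  intro i _
  have h1 : ‖(x - toEuc d (fun j => round (x j))) i‖ = |x i - (round (x i) : ℝ)| := by
    simp [toEuc, Real.norm_eq_abs]
  rw [h1]
  have h2 : |x i - (round (x i) : ℝ)| ≤ 1/2 := abs_sub_round (x i)
  nlinarith [abs_nonneg (x i - (round (x i) : ℝ))]

/-- Global bound: within radius `√d + (k+1)` of any point there are at least `k`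
nonzero lattice points. -/
lemma lat_Sset_bound (hd : 1 ≤ d) (hk : 1 ≤ k) (x : E d) :
    Real.sqrt d + (k + 1) ∈ Sset (intLattice d) k x := by
  classical
  set i0 : Fin d := ⟨0, hd⟩
  set z : Fin d → ℤ := fun i => round (x i) with hz
  set e : Fin d → ℤ := Pi.single i0 1 with he
  set F : ℤ → E d := fun j => toEuc d (z + j • e) with hF
  -- each F j is within the radius
  have hdistF : ∀ j : ℤ, 1 ≤ j → j ≤ (k:ℤ) + 1 → dist x (F j) ≤ Real.sqrt d + (k + 1) := by
    intro j hj1 hj2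
    have h1 : dist (toEuc d z) (F j) = |(j:ℝ)| := by
      rw [dist_eq_norm]
      have : toEuc d z - F j = EuclideanSpace.single i0 (-(j:ℝ)) := by
        ext i
        show (z i : ℝ) - ((z + j • e) i : ℝ) = EuclideanSpace.single i0 (-(j:ℝ)) i
        rw [EuclideanSpace.single_apply]
        simp only [Pi.add_apply, Pi.smul_apply, smul_eq_mul, he, Pi.single_apply]
        by_cases hi : i = i0
        · simp only [hi, if_true]
          push_cast
          ring
        · simp only [hi, if_false]
          push_cast
          ring
      rw [this, EuclideanSpace.norm_single, Real.norm_eq_abs, abs_neg]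
    calc dist x (F j) ≤ dist x (toEuc d z) + dist (toEuc d z) (F j) := dist_triangle _ _ _
    _ ≤ Real.sqrt d + (k + 1) := by
        refine add_le_add (round_close x) ?_
        rw [h1, abs_of_pos (by exact_mod_cast hj1 : (0:ℝ) < j)]
        exact_mod_cast hj2
  -- F is injective
  have hFinj : Function.Injective F := by
    intro j j' hjj
    have := congrArg (fun x : E d => x i0) hjj
    simp only [hF, toEuc] at this
    have h2 : ((z i0 + j * e i0 : ℤ) : ℝ) = ((z i0 + j' * e i0 : ℤ) : ℝ) := by
      exact_mod_cast this
    have h3 : z i0 + j * e i0 = z i0 + j' * e i0 := by exact_mod_cast h2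
    have h4 : e i0 = 1 := by simp [he]
    rw [h4] at h3; omega
  -- nonzero except possibly one j
  have hFne : ∀ j : ℤ, j ≠ -(z i0) → F j ≠ 0 := by
    intro j hj h0
    have h3 : z + j • e = 0 := toEuc_eq_zero_iff.1 h0
    have := congrFun h3 i0
    have h4 : e i0 = 1 := by simp [he]
    simp only [Pi.add_apply, Pi.smul_apply, smul_eq_mul, h4, mul_one, Pi.zero_apply] at this
    omega
  set T : Finset ℤ := (Finset.Icc (1:ℤ) (k+1)).erase (-(z i0)) with hT
  have hTcard : k ≤ T.card := by
    have h1 : (Finset.Icc (1:ℤ) (k+1)).card = k + 1 := by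
      rw [Int.card_Icc]
      omega
    have h2 := Finset.pred_card_le_card_erase (s := Finset.Icc (1:ℤ) (k+1)) (a := -(z i0))
    rw [hT]
    omega
  rw [Sset, mem_setOf_eq, Nle]
  have hsub : F '' (T : Set ℤ) ⊆
      {a | a ∈ intLattice d \ {0} ∧ dist x a ≤ Real.sqrt d + (k + 1)} := by
    rintro a ⟨j, hjT, rfl⟩
    simp only [hT, Finset.coe_erase, Set.mem_diff, Finset.coe_Icc, Set.mem_Icc,
      Set.mem_singleton_iff] at hjT
    refine ⟨⟨toEuc_mem _, hFne j hjT.2⟩, hdistF j hjT.1.1 hjT.1.2⟩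
  calc (k : ℕ∞) ≤ (T.card : ℕ∞) := by exact_mod_cast hTcard
  _ = (T : Set ℤ).encard := (Set.encard_coe_eq_coe_finsetCard T).symm
  _ = (F '' (T : Set ℤ)).encard := ((Function.Injective.injOn hFinj).encard_image).symm
  _ ≤ _ := Set.encard_mono hsub

lemma lat_Sset_nonempty (hd : 1 ≤ d) (hk : 1 ≤ k) (x : E d) :
    (Sset (intLattice d) k x).Nonempty :=
  ⟨_, lat_Sset_bound hd hk x⟩

lemma fk_lat_le (hd : 1 ≤ d) (hk : 1 ≤ k) (x : E d) :
    fk (intLattice d) k x ≤ Real.sqrt d + (k + 1) :=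
  fk_le hk (lat_Sset_bound hd hk x)

lemma fk_lat_zero (hd : 1 ≤ d) (hk : 1 ≤ k) : 1 ≤ fk (intLattice d) k (0 : E d) := by
  refine le_csInf (lat_Sset_nonempty hd hk 0) (fun r hr => ?_)
  by_contra hr1
  push_neg at hr1
  have hempty : {a | a ∈ intLattice d \ {0} ∧ dist (0 : E d) a ≤ r} = ∅ := by
    ext a
    simp only [mem_setOf_eq, mem_empty_iff_false, iff_false]
    rintro ⟨⟨haL, ha0⟩, hd2⟩
    rw [dist_zero_left] at hd2
    exact absurd (lt_of_lt_of_le (lt_of_le_of_lt hd2 hr1) (lat_norm_ge_one haL ha0))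
      (lt_irrefl _)
  rw [Sset, mem_setOf_eq, Nle, hempty, Set.encard_empty] at hr
  simp only [nonpos_iff_eq_zero, Nat.cast_eq_zero] at hr
  omega

/-- Attainment of the `k`-th nearest distance for the lattice. -/
lemma fk_attained (hd : 1 ≤ d) (hk : 1 ≤ k) (x : E d) :
    ∃ a ∈ intLattice d \ {0}, dist x a = fk (intLattice d) k x := by
  classical
  set t := fk (intLattice d) k x with ht
  have hS := lat_Sset_nonempty hd hk (k := k)
  have hbig : ∀ t' : ℝ, t < t' →
      (k : ℕ∞) ≤ {a | a ∈ intLattice d \ {0} ∧ dist x a < t'}.encard := by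
    intro t' ht'
    by_contra hcon
    push_neg at hcon
    exact absurd ((Nlt_lt_iff hk (hS x) t').1 hcon) (not_le.2 ht')
  by_contra hno
  push_neg at hno
  set T' : Set (E d) := {a | a ∈ intLattice d \ {0} ∧ t < dist x a ∧ dist x a ≤ t + 1}
    with hT'
  have hT'fin : T'.Finite := by
    refine (lat_ball_finite x (t+1)).subset ?_
    rintro a ⟨⟨haL, _⟩, _, h2⟩
    exact ⟨haL, h2⟩
  have hsmall : {a | a ∈ intLattice d \ {0} ∧ dist x a < t}.encard < (k : ℕ∞) :=
    (Nlt_lt_iff hk (hS x) t).2 le_rfl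
  rcases Set.eq_empty_or_nonempty T' with hTe | hTne
  · have hsub : {a | a ∈ intLattice d \ {0} ∧ dist x a < t + 1} ⊆
        {a | a ∈ intLattice d \ {0} ∧ dist x a < t} := by
      rintro a ⟨ha, hlt⟩
      refine ⟨ha, ?_⟩
      by_contra hge
      push_neg at hge
      have h1 : t < dist x a := lt_of_le_of_ne hge (fun h => hno a ha h.symm)
      have : a ∈ T' := ⟨ha, h1, le_of_lt hlt⟩
      rw [hTe] at this
      exact this
    exact absurd (le_trans (hbig (t+1) (by linarith)) (Set.encard_mono hsub))
      (not_le.2 hsmall)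
  · obtain ⟨a0, ha0, ha0min⟩ := Set.exists_min_image T' (fun a => dist x a) hT'fin hTne
    set m := dist x a0 with hm
    have hmt : t < m := ha0.2.1
    have hsub : {a | a ∈ intLattice d \ {0} ∧ dist x a < m} ⊆
        {a | a ∈ intLattice d \ {0} ∧ dist x a < t} := by
      rintro a ⟨ha, hlt⟩
      refine ⟨ha, ?_⟩
      by_contra hge
      push_neg at hge
      have h1 : t < dist x a := lt_of_le_of_ne hge (fun h => hno a ha h.symm)
      have h2 : dist x a ≤ t + 1 := le_of_lt (lt_of_lt_of_le hlt (ha0.2.2))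
      exact absurd (ha0min a ⟨ha, h1, h2⟩) (not_le.2 hlt)
    exact absurd (le_trans (hbig m hmt) (Set.encard_mono hsub)) (not_le.2 hsmall)


/-- monotonicity of `fk(t•u) - t` along a ray. -/
lemma ray_mono (hd : 1 ≤ d) (hk : 1 ≤ k) {u : E d} (hu : ‖u‖ = 1)
    {s t : ℝ} (hst : s ≤ t) :
    fk (intLattice d) k (t • u) - t ≤ fk (intLattice d) k (s • u) - s := by
  have h1 : fk (intLattice d) k (t • u) ≤ fk (intLattice d) k (s • u) + dist (t • u) (s • u) :=
    fk_le_fk_add hk (lat_Sset_nonempty hd hk _)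
  have h2 : dist (t • u) (s • u) = t - s := by
    rw [dist_eq_norm, ← sub_smul, norm_smul, hu, mul_one, Real.norm_eq_abs,
      abs_of_nonneg (by linarith)]
  rw [h2] at h1
  linarith

lemma unique_cross (hd : 1 ≤ d) (hk : 1 ≤ k) {u : E d} (hu : ‖u‖ = 1)
    {l m : ℝ} (hl : 0 ≤ l) (hm : 0 ≤ m)
    (h1 : fk (intLattice d) k (l • u) = l) (h2 : fk (intLattice d) k (m • u) = m) :
    l = m := by
  classical
  -- enough to rule out l < m (and m < l by symmetry)
  have key : ∀ l' m' : ℝ, 0 ≤ l' → fk (intLattice d) k (l' • u) = l' →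
      fk (intLattice d) k (m' • u) = m' → ¬ l' < m' := by
    intro l m hl h1 h2 hlm
    have hl0 : 0 < l := by
      rcases lt_or_eq_of_le hl with h | h
      · exact h
      · exfalso
        rw [← h] at h1
        rw [zero_smul] at h1
        have := fk_lat_zero (d := d) hd hk
        rw [h1] at this
        linarith
    have hm0 : 0 < m := lt_trans hl0 hlm
    -- fk(λ•u) = λ on [l, m]
    have hall : ∀ lam ∈ Set.Icc l m, fk (intLattice d) k (lam • u) = lam := by
      rintro lam ⟨hlow, hhigh⟩
      have ha := ray_mono hd hk hu hlow (t := lam)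
      have hb := ray_mono hd hk hu hhigh (s := lam)
      rw [h1] at ha
      rw [h2] at hb
      linarith
    -- attained point for each lam
    have hex : ∀ lam ∈ Set.Icc l m, ∃ a, a ∈ intLattice d \ {0} ∧ dist (lam • u) a = lam := by
      intro lam hlam
      obtain ⟨a, ha, hda⟩ := fk_attained hd hk (lam • u)
      exact ⟨a, ha, by rw [hda, hall lam hlam]⟩
    set G : ℝ → E d := fun lam => if h : lam ∈ Set.Icc l m then (hex lam h).choose else 0
      with hG
    have hGspec : ∀ lam ∈ Set.Icc l m, G lam ∈ intLattice d \ {0} ∧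
        dist (lam • u) (G lam) = lam := by
      intro lam h
      rw [hG]
      simp only [h, dif_pos]
      exact (hex lam h).choose_spec
    -- the key algebraic identity
    have halg : ∀ lam ∈ Set.Icc l m, ‖G lam‖ ^ 2 = 2 * lam * (inner ℝ u (G lam) : ℝ) := by
      intro lam h
      obtain ⟨-, hdist⟩ := hGspec lam h
      have hlam0 : 0 ≤ lam := le_trans (le_of_lt hl0) h.1
      have hsq : dist (lam • u) (G lam) ^ 2 = lam ^ 2 := by rw [hdist]
      rw [dist_eq_norm, norm_sub_sq_real] at hsq
      have hnorm : ‖lam • u‖ ^ 2 = lam ^ 2 := by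
        rw [norm_smul, hu, mul_one, Real.norm_eq_abs, sq_abs]
      have hinner : (inner ℝ (lam • u) (G lam) : ℝ) = lam * inner ℝ u (G lam) :=
        real_inner_smul_left _ _ _
      rw [hnorm, hinner] at hsq
      ring_nf
      ring_nf at hsq
      linarith
    -- injectivity
    have hinj : Set.InjOn G (Set.Icc l m) := by
      intro lam hlam mu hmu heq
      obtain ⟨⟨hL, h0⟩, -⟩ := hGspec lam hlam
      have e1 := halg lam hlam
      have e2 := halg mu hmu
      rw [heq] at e1
      have hp : (inner ℝ u (G mu) : ℝ) ≠ 0 := by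
        intro hp0
        rw [hp0] at e1
        have hge : 1 ≤ ‖G mu‖ := by
          rw [← heq]
          exact lat_norm_ge_one hL (by simpa using h0)
        nlinarith
      have hfactor : (lam - mu) * (inner ℝ u (G mu) : ℝ) = 0 := by
        linear_combination (e2 - e1) / 2
      rcases mul_eq_zero.1 hfactor with h | h
      · linarith
      · exact absurd h hp
    -- image lies in a finite set
    have hmaps : G '' (Set.Icc l m) ⊆ {a | a ∈ intLattice d ∧ dist 0 a ≤ 2 * m} := by
      rintro a ⟨lam, hlam, rfl⟩
      obtain ⟨⟨hL, -⟩, hdist⟩ := hGspec lam hlam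
      refine ⟨hL, ?_⟩
      rw [dist_zero_left]
      calc ‖G lam‖ ≤ ‖G lam - lam • u‖ + ‖lam • u‖ := by
            calc ‖G lam‖ = ‖G lam - lam • u + lam • u‖ := by rw [sub_add_cancel]
            _ ≤ ‖G lam - lam • u‖ + ‖lam • u‖ := norm_add_le _ _
      _ ≤ 2 * m := by
            have h4 : ‖G lam - lam • u‖ = lam := by
              rw [norm_sub_rev, ← dist_eq_norm]
              exact hdist
            have h5 : ‖lam • u‖ = lam := by
              rw [norm_smul, hu, mul_one, Real.norm_eq_abs,
                abs_of_nonneg (le_trans (le_of_lt hl0) hlam.1)]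
            rw [h4, h5]
            linarith [hlam.2]
    have hfin : {a | a ∈ intLattice d ∧ dist 0 a ≤ 2 * m}.Finite := lat_ball_finite 0 (2 * m)
    have hinf : (Set.Icc l m).Infinite := Set.Icc_infinite hlm
    exact (hfin.subset hmaps).not_infinite (hinf.image hinj)
  rcases lt_trichotomy l m with h | h | h
  · exact absurd h (key l m hl h1 h2)
  · exact h
  · exact absurd h (key m l hm h2 h1)


set_option maxHeartbeats 2000000 in
lemma key_lemma (hd : 1 ≤ d) (hk : 1 ≤ k) {ε : ℝ} (hε : 0 < ε) :
    ∃ τ : ℝ, 0 < τ ∧ τ ≤ 1 ∧ ∀ u : E d, ‖u‖ = 1 → ∀ lam mu : ℝ, 0 ≤ lam → 0 ≤ mu →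
      fk (intLattice d) k (lam • u) = lam →
      |fk (intLattice d) k (mu • u) - mu| ≤ τ → |lam - mu| < ε := by
  by_contra hcon
  push_neg at hcon
  have hs : ∀ n : ℕ, ∃ u : E d, ‖u‖ = 1 ∧ ∃ lam mu : ℝ, 0 ≤ lam ∧ 0 ≤ mu ∧
      fk (intLattice d) k (lam • u) = lam ∧
      |fk (intLattice d) k (mu • u) - mu| ≤ 1/(n+1) ∧ ε ≤ |lam - mu| := by
    intro n
    obtain ⟨u, hu, lam, mu, hl, hm, heq, hle, hge⟩ :=
      hcon (min 1 (1/(n+1))) (lt_min one_pos (by positivity)) (min_le_left _ _)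
    exact ⟨u, hu, lam, mu, hl, hm, heq, le_trans hle (min_le_right _ _), hge⟩
  choose u hu lam mu hl hm heq hle hge using hs
  set C : ℝ := Real.sqrt d + (k + 1) with hC
  have hCpos : 0 ≤ C := by
    have := Real.sqrt_nonneg (d:ℝ)
    have : (0:ℝ) ≤ (k:ℝ) := Nat.cast_nonneg k
    positivity
  set R : ℝ := C + 1 with hR
  have hlamR : ∀ n, lam n ≤ R := by
    intro n
    have h1 : fk (intLattice d) k (lam n • u n) ≤ C := fk_lat_le hd hk _
    rw [heq n] at h1
    linarith
  have hmuR : ∀ n, mu n ≤ R := by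
    intro n
    have h1 : fk (intLattice d) k (mu n • u n) ≤ C := fk_lat_le hd hk _
    have h2 := hle n
    have h3 : (1:ℝ)/(n+1) ≤ 1 := by
      rw [div_le_one (by positivity)]
      linarith [Nat.cast_nonneg (α := ℝ) n]
    have h4 := abs_le.1 h2
    linarith [h4.1]
  -- compactness
  set seq : ℕ → (E d) × (ℝ × ℝ) := fun n => (u n, lam n, mu n) with hseq
  have hKcompact : IsCompact ((sphere (0 : E d) 1) ×ˢ ((Set.Icc (0:ℝ) R) ×ˢ (Set.Icc (0:ℝ) R))) :=
    (isCompact_sphere 0 1).prod (isCompact_Icc.prod isCompact_Icc)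
  have hmemK : ∀ n, seq n ∈ (sphere (0 : E d) 1) ×ˢ ((Set.Icc (0:ℝ) R) ×ˢ (Set.Icc (0:ℝ) R)) := by
    intro n
    exact ⟨mem_sphere_zero_iff_norm.2 (hu n), ⟨hl n, hlamR n⟩, ⟨hm n, hmuR n⟩⟩
  obtain ⟨⟨u0, l0, m0⟩, hmem0, σ, hσ, hconv⟩ := hKcompact.tendsto_subseq hmemK
  have hu0 : ‖u0‖ = 1 := mem_sphere_zero_iff_norm.1 hmem0.1
  have hl0 : 0 ≤ l0 := hmem0.2.1.1
  have hm0 : 0 ≤ m0 := hmem0.2.2.1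
  -- component limits
  have huc : Filter.Tendsto (fun n => u (σ n)) Filter.atTop (nhds u0) :=
    (continuous_fst.tendsto _).comp hconv
  have hlc : Filter.Tendsto (fun n => lam (σ n)) Filter.atTop (nhds l0) :=
    ((continuous_fst.comp continuous_snd).tendsto _).comp hconv
  have hmc : Filter.Tendsto (fun n => mu (σ n)) Filter.atTop (nhds m0) :=
    ((continuous_snd.comp continuous_snd).tendsto _).comp hconv
  have hfkcont : Continuous (fk (intLattice d) k) :=
    fk_continuous (intLattice d) hk (lat_Sset_nonempty hd hk)
  have hsmulL : Filter.Tendsto (fun n => lam (σ n) • u (σ n)) Filter.atTop (nhds (l0 • u0)) :=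
    hlc.smul huc
  have hsmulM : Filter.Tendsto (fun n => mu (σ n) • u (σ n)) Filter.atTop (nhds (m0 • u0)) :=
    hmc.smul huc
  have hfl : Filter.Tendsto (fun n => fk (intLattice d) k (lam (σ n) • u (σ n)))
      Filter.atTop (nhds (fk (intLattice d) k (l0 • u0))) :=
    (hfkcont.tendsto _).comp hsmulL
  have hfm : Filter.Tendsto (fun n => fk (intLattice d) k (mu (σ n) • u (σ n)))
      Filter.atTop (nhds (fk (intLattice d) k (m0 • u0))) :=
    (hfkcont.tendsto _).comp hsmulM
  -- fk(l0 • u0) = l0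
  have heql0 : fk (intLattice d) k (l0 • u0) = l0 := by
    refine tendsto_nhds_unique ?_ hlc
    convert hfl using 2 with n
    rw [heq (σ n)]
  -- fk(m0 • u0) = m0
  have heqm0 : fk (intLattice d) k (m0 • u0) = m0 := by
    have habs : Filter.Tendsto
        (fun n => |fk (intLattice d) k (mu (σ n) • u (σ n)) - mu (σ n)|)
        Filter.atTop (nhds (|fk (intLattice d) k (m0 • u0) - m0|)) :=
      ((hfm.sub hmc).abs)
    have hzero : Filter.Tendsto (fun n => (1:ℝ)/(σ n + 1)) Filter.atTop (nhds 0) := by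
      have h1 : Filter.Tendsto (fun n : ℕ => (1:ℝ)/(n + 1)) Filter.atTop (nhds 0) :=
        tendsto_one_div_add_atTop_nhds_zero_nat
      exact h1.comp hσ.tendsto_atTop
    have hle2 : |fk (intLattice d) k (m0 • u0) - m0| ≤ 0 :=
      le_of_tendsto_of_tendsto' habs hzero (fun n => hle (σ n))
    have := abs_nonneg (fk (intLattice d) k (m0 • u0) - m0)
    have h0 : |fk (intLattice d) k (m0 • u0) - m0| = 0 := le_antisymm hle2 this
    have := abs_eq_zero.1 h0
    linarith
  -- limit of gap
  have hgap : ε ≤ |l0 - m0| := by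
    have habs : Filter.Tendsto (fun n => |lam (σ n) - mu (σ n)|) Filter.atTop
        (nhds (|l0 - m0|)) := (hlc.sub hmc).abs
    exact le_of_tendsto_of_tendsto' tendsto_const_nhds habs (fun n => hge (σ n))
  have : l0 = m0 := unique_cross hd hk hu0 hl0 hm0 heql0 heqm0
  rw [this, sub_self, abs_zero] at hgap
  linarith

end Scratch

/-- Stability of Brillouin zones: for every `k ≥ 1` and `ε > 0` there is
`τ > 0` such that for every perturbation of `ℤ^d` of magnitude less than `τ` fixing `0`,
and every direction `u`, the crossing parameters of the ray `λ ↦ λu` with the boundaries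
of `D_k` before and after the perturbation differ by less than `ε`. -/
theorem stability_of_brillouin_zones (d : ℕ) (hd : 1 ≤ d) (k : ℕ) (hk : 1 ≤ k)
    (ε : ℝ) (hε : 0 < ε) :
    ∃ τ > (0 : ℝ), ∀ φ : (Fin d → ℤ) → EuclideanSpace ℝ (Fin d),
      Function.Injective φ → φ 0 = 0 → (∀ a, ‖toEuc d a - φ a‖ < τ) →
      ∀ u : EuclideanSpace ℝ (Fin d), ‖u‖ = 1 →
      ∀ lam mu : ℝ, 0 ≤ lam → 0 ≤ mu →
        lam • u ∈ frontier (bzUnion d k (intLattice d)) →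
        mu • u ∈ frontier (bzUnion d k (Set.range φ)) →
        |lam - mu| < ε := by
  classical
  obtain ⟨τ, hτ0, hτ1, hkey⟩ := Scratch.key_lemma (d := d) (k := k) hd hk hε
  refine ⟨τ, hτ0, ?_⟩
  intro φ hφinj hφ0 hφτ u hu lam mu hlam hmu hfrA hfrB
  have hSA : ∀ x : Scratch.E d, (Scratch.Sset (intLattice d) k x).Nonempty :=
    Scratch.lat_Sset_nonempty hd hk
  -- the forward comparison map
  set g1 : Scratch.E d → Scratch.E d := fun y => φ (Function.invFun (toEuc d) y) with hg1
  have hinv1 : ∀ a : Fin d → ℤ, Function.invFun (toEuc d) (toEuc d a) = a :=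
    Function.leftInverse_invFun Scratch.toEuc_injective
  have hg1map : ∀ y ∈ intLattice d \ {0}, g1 y ∈ Set.range φ \ {0} := by
    rintro y ⟨hyA, hy0⟩
    rw [Scratch.intLattice_eq_range] at hyA
    obtain ⟨a, rfl⟩ := hyA
    have ha0 : a ≠ 0 := by
      intro h
      exact hy0 (by rw [h]; exact Scratch.toEuc_eq_zero_iff.2 rfl)
    have hval : g1 (toEuc d a) = φ a := by rw [hg1]; simp only; rw [hinv1]
    rw [hval]
    refine ⟨⟨a, rfl⟩, ?_⟩
    simp only [Set.mem_singleton_iff]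
    intro h
    exact ha0 (hφinj (h.trans hφ0.symm))
  have hg1dist : ∀ y ∈ intLattice d \ {0}, dist y (g1 y) ≤ τ := by
    rintro y ⟨hyA, hy0⟩
    rw [Scratch.intLattice_eq_range] at hyA
    obtain ⟨a, rfl⟩ := hyA
    have hval : g1 (toEuc d a) = φ a := by rw [hg1]; simp only; rw [hinv1]
    rw [hval, dist_eq_norm]
    exact le_of_lt (hφτ a)
  have hg1inj : Set.InjOn g1 (intLattice d \ {0}) := by
    rintro y hy y' hy' hgg
    obtain ⟨a, rfl⟩ := Scratch.intLattice_eq_range ▸ hy.1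
    obtain ⟨a', rfl⟩ := Scratch.intLattice_eq_range ▸ hy'.1
    have hval : g1 (toEuc d a) = φ a := by rw [hg1]; simp only; rw [hinv1]
    have hval' : g1 (toEuc d a') = φ a' := by rw [hg1]; simp only; rw [hinv1]
    rw [hval, hval'] at hgg
    rw [hφinj hgg]
  -- the backward comparison map
  set g2 : Scratch.E d → Scratch.E d := fun y => toEuc d (Function.invFun φ y) with hg2
  have hinv2 : ∀ a : Fin d → ℤ, Function.invFun φ (φ a) = a :=
    Function.leftInverse_invFun hφinj
  have hg2map : ∀ y ∈ Set.range φ \ {0}, g2 y ∈ intLattice d \ {0} := by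
    rintro y ⟨⟨a, rfl⟩, hy0⟩
    have ha0 : a ≠ 0 := by
      intro h
      exact hy0 (by rw [h]; exact hφ0)
    have hval : g2 (φ a) = toEuc d a := by rw [hg2]; simp only; rw [hinv2]
    rw [hval]
    exact ⟨Scratch.toEuc_mem a, fun h => ha0 (Scratch.toEuc_eq_zero_iff.1 h)⟩
  have hg2dist : ∀ y ∈ Set.range φ \ {0}, dist y (g2 y) ≤ τ := by
    rintro y ⟨⟨a, rfl⟩, hy0⟩
    have hval : g2 (φ a) = toEuc d a := by rw [hg2]; simp only; rw [hinv2]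
    rw [hval, dist_eq_norm, norm_sub_rev]
    exact le_of_lt (hφτ a)
  have hg2inj : Set.InjOn g2 (Set.range φ \ {0}) := by
    rintro y hy y' hy' hgg
    obtain ⟨a, rfl⟩ := hy.1
    obtain ⟨a', rfl⟩ := hy'.1
    have hval : g2 (φ a) = toEuc d a := by rw [hg2]; simp only; rw [hinv2]
    have hval' : g2 (φ a') = toEuc d a' := by rw [hg2]; simp only; rw [hinv2]
    rw [hval, hval'] at hgg
    rw [Scratch.toEuc_injective hgg]
  -- comparison of the two distance functions
  have hSB : ∀ x : Scratch.E d, (Scratch.Sset (Set.range φ) k x).Nonempty := fun x =>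
    (Scratch.fk_comp hk g1 hg1inj hg1map hg1dist (hSA x)).1
  have hBA : ∀ x : Scratch.E d,
      Scratch.fk (Set.range φ) k x ≤ Scratch.fk (intLattice d) k x + τ := fun x =>
    (Scratch.fk_comp hk g1 hg1inj hg1map hg1dist (hSA x)).2
  have hAB : ∀ x : Scratch.E d,
      Scratch.fk (intLattice d) k x ≤ Scratch.fk (Set.range φ) k x + τ := fun x =>
    (Scratch.fk_comp hk g2 hg2inj hg2map hg2dist (hSB x)).2
  -- frontier crossings
  have h1 : Scratch.fk (intLattice d) k (lam • u) = ‖lam • u‖ :=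
    Scratch.frontier_fk_eq (intLattice d) hk hSA hfrA
  have h2 : Scratch.fk (Set.range φ) k (mu • u) = ‖mu • u‖ :=
    Scratch.frontier_fk_eq (Set.range φ) hk hSB hfrB
  have hnorml : ‖lam • u‖ = lam := by
    rw [norm_smul, hu, mul_one, Real.norm_eq_abs, abs_of_nonneg hlam]
  have hnormm : ‖mu • u‖ = mu := by
    rw [norm_smul, hu, mul_one, Real.norm_eq_abs, abs_of_nonneg hmu]
  have hAmu : |Scratch.fk (intLattice d) k (mu • u) - mu| ≤ τ := by
    have ha := hBA (mu • u)
    have hb := hAB (mu • u)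
    rw [h2, hnormm] at ha hb
    rw [abs_le]
    constructor <;> linarith
  exact hkey u hu lam mu hlam hmu (by rw [h1, hnorml]) hAmu
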